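/- Let ζ: ℤ² → ℝ satisfy the squiral recursion relations with ζ(0,0) = a ≥ 0. Then ζ(m,n) = a·η(m,n), where η is the unique solution with η(0,0) = 1. In particular, ζ is positive definite on ℤ², and if a > 0 then ζ(3^k m, 3^k n) = ζ(m,n) does not tend to zero along the sequence ((3^k, 3^k))_{k ≥ 0}, since ζ(1,1) = a/6 ≠ 0. -/

import Mathlib

open Finset

/-- The nine squiral recursion relations for the autocorrelation coefficients. -/
def SquiralRec (η : ℤ → ℤ → ℝ) : Prop :=
  ∀ m n : ℤ,
    η (3*m) (3*n) = η m n ∧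
    η (3*m) (3*n+1) = -(2/9) * η m n + (1/3) * η m (n+1) ∧
    η (3*m) (3*n+2) = (1/3) * η m n - (2/9) * η m (n+1) ∧
    η (3*m+1) (3*n) = -(2/9) * η m n + (1/3) * η (m+1) n ∧
    η (3*m+1) (3*n+1) = -(2/9) * (η (m+1) n + η m (n+1)) + (1/9) * η (m+1) (n+1) ∧
    η (3*m+1) (3*n+2) = -(2/9) * (η m n + η (m+1) (n+1)) + (1/9) * η (m+1) n ∧
    η (3*m+2) (3*n) = (1/3) * η m n - (2/9) * η (m+1) n ∧
    η (3*m+2) (3*n+1) = -(2/9) * (η m n + η (m+1) (n+1)) + (1/9) * η m (n+1) ∧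
    η (3*m+2) (3*n+2) = (1/9) * η m n - (2/9) * (η (m+1) n + η m (n+1))

/-- sign matrix of the squiral bijective block substitution -/
noncomputable def Esq (d1 d2 : ℤ) : ℝ := if d1 = 1 ∨ d2 = 1 then -1 else 1

lemma Esq_abs (d1 d2 : ℤ) : |Esq d1 d2| = 1 := by
  unfold Esq; split <;> norm_num

/-- K-th level weight pattern, period 3^K in each variable -/
noncomputable def wsq : ℕ → ℤ → ℤ → ℝ
  | 0, _, _ => 1
  | (K+1), m, n => Esq (m % 3) (n % 3) * wsq K (m / 3) (n / 3)

lemma wsq_succ (K : ℕ) (m n : ℤ) :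
    wsq (K+1) m n = Esq (m % 3) (n % 3) * wsq K (m / 3) (n / 3) := rfl

lemma wsq_abs (K : ℕ) (m n : ℤ) : |wsq K m n| = 1 := by
  induction K generalizing m n with
  | zero => simp [wsq]
  | succ K ih => rw [wsq_succ, abs_mul, Esq_abs, ih]; ring

lemma wsq_per_left (K : ℕ) (m n : ℤ) : wsq K (m + 3^K) n = wsq K m n := by
  induction K generalizing m n with
  | zero => simp [wsq]
  | succ K ih =>
    rw [wsq_succ, wsq_succ]
    have hP : (0:ℤ) < 3^K := by positivity
    have h1 : (m + 3^(K+1)) % 3 = m % 3 := by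
      have : (3:ℤ)^(K+1) = 3 * 3^K := by ring
      omega
    have h2 : (m + 3^(K+1)) / 3 = m / 3 + 3^K := by
      have : (3:ℤ)^(K+1) = 3 * 3^K := by ring
      omega
    rw [h1, h2, ih]

lemma wsq_per_right (K : ℕ) (m n : ℤ) : wsq K m (n + 3^K) = wsq K m n := by
  induction K generalizing m n with
  | zero => simp [wsq]
  | succ K ih =>
    rw [wsq_succ, wsq_succ]
    have h1 : (n + 3^(K+1)) % 3 = n % 3 := by
      have : (3:ℤ)^(K+1) = 3 * 3^K := by ring
      omega
    have h2 : (n + 3^(K+1)) / 3 = n / 3 + 3^K := by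
      have : (3:ℤ)^(K+1) = 3 * 3^K := by ring
      omega
    rw [h1, h2, ih]

/-- unnormalized cyclic autocorrelation -/
noncomputable def Scor (K : ℕ) (M N : ℤ) : ℝ :=
  ∑ i ∈ range (3^K), ∑ j ∈ range (3^K), wsq K i j * wsq K (i + M) (j + N)

/-- normalized cyclic autocorrelation -/
noncomputable def gsq (K : ℕ) (M N : ℤ) : ℝ := Scor K M N / 9^K

lemma gsq_abs_le_one (K : ℕ) (M N : ℤ) : |gsq K M N| ≤ 1 := by
  have h : |Scor K M N| ≤ 9^K := by
    calc |Scor K M N| ≤ ∑ i ∈ range (3^K), |∑ j ∈ range (3^K), wsq K i j * wsq K (i + M) (j + N)| :=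
          Finset.abs_sum_le_sum_abs _ _
    _ ≤ ∑ i ∈ range (3^K), ∑ j ∈ range (3^K), |wsq K i j * wsq K (i + M) (j + N)| := by
          apply Finset.sum_le_sum; intro i _; exact Finset.abs_sum_le_sum_abs _ _
    _ = ∑ _i ∈ range (3^K), ∑ _j ∈ range (3^K), (1:ℝ) := by
          apply Finset.sum_congr rfl; intro i _; apply Finset.sum_congr rfl; intro j _
          rw [abs_mul, wsq_abs, wsq_abs]; norm_num
    _ = 9^K := by
          simp [Finset.sum_const, Finset.card_range]
          rw [← mul_pow]; norm_num
  rw [gsq, abs_div, abs_of_pos (show (0:ℝ) < 9^K by positivity), div_le_one (by positivity)]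
  exact h

section
variable {α : Type*} [AddCommMonoid α]

lemma sum_range_three_mul (n : ℕ) (g : ℤ → α) :
    ∑ i ∈ range (3*n), g ↑i
      = ∑ u ∈ range n, (g (3*↑u + 0) + g (3*↑u + 1) + g (3*↑u + 2)) := by
  induction n with
  | zero => simp
  | succ n ih =>
    have h3 : 3 * (n+1) = (3*n) + 1 + 1 + 1 := by ring
    rw [h3, Finset.sum_range_succ, Finset.sum_range_succ, Finset.sum_range_succ, ih,
      Finset.sum_range_succ]
    push_cast
    ring_nf
    abel

end

lemma sum_range_three_mul2 (n : ℕ) (g : ℤ → ℤ → ℝ) :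
    ∑ i ∈ range (3*n), ∑ j ∈ range (3*n), g ↑i ↑j
      = ∑ u ∈ range n, ∑ v ∈ range n,
          (g (3*↑u+0) (3*↑v+0) + g (3*↑u+0) (3*↑v+1) + g (3*↑u+0) (3*↑v+2)
         + (g (3*↑u+1) (3*↑v+0) + g (3*↑u+1) (3*↑v+1) + g (3*↑u+1) (3*↑v+2))
         + (g (3*↑u+2) (3*↑v+0) + g (3*↑u+2) (3*↑v+1) + g (3*↑u+2) (3*↑v+2))) := by
  rw [sum_range_three_mul n (fun x => ∑ j ∈ range (3*n), g x ↑j)]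
  refine Finset.sum_congr rfl fun u _ => ?_
  rw [sum_range_three_mul n (g (3*↑u+0)), sum_range_three_mul n (g (3*↑u+1)),
    sum_range_three_mul n (g (3*↑u+2)), ← Finset.sum_add_distrib, ← Finset.sum_add_distrib]

lemma wsq_pair (K : ℕ) (u v m n d1 d2 r s : ℤ)
    (h1 : 0 ≤ d1) (h2 : d1 < 3) (h3 : 0 ≤ d2) (h4 : d2 < 3) :
    wsq (K+1) (3*u+d1) (3*v+d2) * wsq (K+1) (3*u+d1 + (3*m+r)) (3*v+d2 + (3*n+s))
      = (Esq d1 d2 * Esq ((d1+r) % 3) ((d2+s) % 3)) *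
        (wsq K u v * wsq K (u + (m + (d1+r)/3)) (v + (n + (d2+s)/3))) := by
  rw [wsq_succ, wsq_succ]
  have e1 : (3*u+d1) % 3 = d1 := by omega
  have e2 : (3*v+d2) % 3 = d2 := by omega
  have e3 : (3*u+d1) / 3 = u := by omega
  have e4 : (3*v+d2) / 3 = v := by omega
  have e5 : (3*u+d1 + (3*m+r)) % 3 = (d1+r) % 3 := by omega
  have e6 : (3*v+d2 + (3*n+s)) % 3 = (d2+s) % 3 := by omega
  have e7 : (3*u+d1 + (3*m+r)) / 3 = u + (m + (d1+r)/3) := by omega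
  have e8 : (3*v+d2 + (3*n+s)) / 3 = v + (n + (d2+s)/3) := by omega
  rw [e1, e2, e3, e4, e5, e6, e7, e8]
  ring

lemma Scor_succ (K : ℕ) (m n r s : ℤ) :
    Scor (K+1) (3*m+r) (3*n+s)
      = Esq 0 0 * Esq ((0+r)%3) ((0+s)%3) * Scor K (m + (0+r)/3) (n + (0+s)/3)
      + Esq 0 1 * Esq ((0+r)%3) ((1+s)%3) * Scor K (m + (0+r)/3) (n + (1+s)/3)
      + Esq 0 2 * Esq ((0+r)%3) ((2+s)%3) * Scor K (m + (0+r)/3) (n + (2+s)/3)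
      + Esq 1 0 * Esq ((1+r)%3) ((0+s)%3) * Scor K (m + (1+r)/3) (n + (0+s)/3)
      + Esq 1 1 * Esq ((1+r)%3) ((1+s)%3) * Scor K (m + (1+r)/3) (n + (1+s)/3)
      + Esq 1 2 * Esq ((1+r)%3) ((2+s)%3) * Scor K (m + (1+r)/3) (n + (2+s)/3)
      + Esq 2 0 * Esq ((2+r)%3) ((0+s)%3) * Scor K (m + (2+r)/3) (n + (0+s)/3)
      + Esq 2 1 * Esq ((2+r)%3) ((1+s)%3) * Scor K (m + (2+r)/3) (n + (1+s)/3)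
      + Esq 2 2 * Esq ((2+r)%3) ((2+s)%3) * Scor K (m + (2+r)/3) (n + (2+s)/3) := by
  have h3 : (3:ℕ)^(K+1) = 3 * 3^K := by ring
  have h0 : Scor (K+1) (3*m+r) (3*n+s)
      = ∑ i ∈ range (3*3^K), ∑ j ∈ range (3*3^K),
          (fun (x y : ℤ) => wsq (K+1) x y * wsq (K+1) (x + (3*m+r)) (y + (3*n+s))) ↑i ↑j := by
    rw [Scor, h3]
  rw [h0, sum_range_three_mul2 (3^K) (fun x y => wsq (K+1) x y * wsq (K+1) (x + (3*m+r)) (y + (3*n+s)))]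
  have W : ∀ (d1 d2 : ℤ), 0 ≤ d1 → d1 < 3 → 0 ≤ d2 → d2 < 3 → ∀ u v : ℤ,
      wsq (K+1) (3*u+d1) (3*v+d2) * wsq (K+1) (3*u+d1 + (3*m+r)) (3*v+d2 + (3*n+s))
        = (Esq d1 d2 * Esq ((d1+r) % 3) ((d2+s) % 3)) *
          (wsq K u v * wsq K (u + (m + (d1+r)/3)) (v + (n + (d2+s)/3))) :=
    fun d1 d2 a b c d u v => wsq_pair K u v m n d1 d2 r s a b c d
  simp only [W 0 0 (by norm_num) (by norm_num) (by norm_num) (by norm_num),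
    W 0 1 (by norm_num) (by norm_num) (by norm_num) (by norm_num),
    W 0 2 (by norm_num) (by norm_num) (by norm_num) (by norm_num),
    W 1 0 (by norm_num) (by norm_num) (by norm_num) (by norm_num),
    W 1 1 (by norm_num) (by norm_num) (by norm_num) (by norm_num),
    W 1 2 (by norm_num) (by norm_num) (by norm_num) (by norm_num),
    W 2 0 (by norm_num) (by norm_num) (by norm_num) (by norm_num),
    W 2 1 (by norm_num) (by norm_num) (by norm_num) (by norm_num),
    W 2 2 (by norm_num) (by norm_num) (by norm_num) (by norm_num)]
  simp only [Finset.sum_add_distrib, ← Finset.mul_sum]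
  unfold Scor
  ring

/-- cross-level (or same-level) squiral relations -/
def SqRel (f g : ℤ → ℤ → ℝ) : Prop :=
  ∀ m n : ℤ,
    f (3*m) (3*n) = g m n ∧
    f (3*m) (3*n+1) = -(2/9) * g m n + (1/3) * g m (n+1) ∧
    f (3*m) (3*n+2) = (1/3) * g m n - (2/9) * g m (n+1) ∧
    f (3*m+1) (3*n) = -(2/9) * g m n + (1/3) * g (m+1) n ∧
    f (3*m+1) (3*n+1) = -(2/9) * (g (m+1) n + g m (n+1)) + (1/9) * g (m+1) (n+1) ∧
    f (3*m+1) (3*n+2) = -(2/9) * (g m n + g (m+1) (n+1)) + (1/9) * g (m+1) n ∧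
    f (3*m+2) (3*n) = (1/3) * g m n - (2/9) * g (m+1) n ∧
    f (3*m+2) (3*n+1) = -(2/9) * (g m n + g (m+1) (n+1)) + (1/9) * g m (n+1) ∧
    f (3*m+2) (3*n+2) = (1/9) * g m n - (2/9) * (g (m+1) n + g m (n+1))

lemma gsq_rel (K : ℕ) : SqRel (gsq (K+1)) (gsq K) := by
  intro m n
  have hne : (9:ℝ)^K ≠ 0 := by positivity
  have h9 : (9:ℝ)^(K+1) = 9 * 9^K := by ring
  refine ⟨?_, ?_, ?_, ?_, ?_, ?_, ?_, ?_, ?_⟩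
  · have h := Scor_succ K m n 0 0
    norm_num [Esq] at h
    simp only [gsq]
    rw [h, h9]
    field_simp
    ring
  · have h := Scor_succ K m n 0 1
    norm_num [Esq] at h
    simp only [gsq]
    rw [h, h9]
    field_simp
    ring
  · have h := Scor_succ K m n 0 2
    norm_num [Esq] at h
    simp only [gsq]
    rw [h, h9]
    field_simp
    ring
  · have h := Scor_succ K m n 1 0
    norm_num [Esq] at h
    simp only [gsq]
    rw [h, h9]
    field_simp
    ring
  · have h := Scor_succ K m n 1 1
    norm_num [Esq] at h
    simp only [gsq]
    rw [h, h9]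
    field_simp
    ring
  · have h := Scor_succ K m n 1 2
    norm_num [Esq] at h
    simp only [gsq]
    rw [h, h9]
    field_simp
    ring
  · have h := Scor_succ K m n 2 0
    norm_num [Esq] at h
    simp only [gsq]
    rw [h, h9]
    field_simp
    ring
  · have h := Scor_succ K m n 2 1
    norm_num [Esq] at h
    simp only [gsq]
    rw [h, h9]
    field_simp
    ring
  · have h := Scor_succ K m n 2 2
    norm_num [Esq] at h
    simp only [gsq]
    rw [h, h9]
    field_simp
    ring

lemma SqRel.sub {f g f' g' : ℤ → ℤ → ℝ} (h : SqRel f g) (h' : SqRel f' g') :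
    SqRel (fun m n => f m n - f' m n) (fun m n => g m n - g' m n) := by
  intro m n
  obtain ⟨a1,a2,a3,a4,a5,a6,a7,a8,a9⟩ := h m n
  obtain ⟨b1,b2,b3,b4,b5,b6,b7,b8,b9⟩ := h' m n
  refine ⟨?_,?_,?_,?_,?_,?_,?_,?_,?_⟩ <;> simp only []
  · rw [a1, b1]
  · rw [a2, b2]; ring
  · rw [a3, b3]; ring
  · rw [a4, b4]; ring
  · rw [a5, b5]; ring
  · rw [a6, b6]; ring
  · rw [a7, b7]; ring
  · rw [a8, b8]; ring
  · rw [a9, b9]; ring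

lemma SqRel.const_mul {f g : ℤ → ℤ → ℝ} (c : ℝ) (h : SqRel f g) :
    SqRel (fun m n => c * f m n) (fun m n => c * g m n) := by
  intro m n
  obtain ⟨a1,a2,a3,a4,a5,a6,a7,a8,a9⟩ := h m n
  refine ⟨?_,?_,?_,?_,?_,?_,?_,?_,?_⟩ <;> simp only []
  · rw [a1]
  · rw [a2]; ring
  · rw [a3]; ring
  · rw [a4]; ring
  · rw [a5]; ring
  · rw [a6]; ring
  · rw [a7]; ring
  · rw [a8]; ring
  · rw [a9]; ring

/-- the nine values on the central block, in terms of the value at the origin -/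
lemma sqrel_block {f : ℤ → ℤ → ℝ} (h : SqRel f f) :
    f 0 1 = -(1/3) * f 0 0 ∧ f 0 (-1) = -(1/3) * f 0 0 ∧
    f 1 0 = -(1/3) * f 0 0 ∧ f (-1) 0 = -(1/3) * f 0 0 ∧
    f 1 1 = (1/6) * f 0 0 ∧ f 1 (-1) = (1/6) * f 0 0 ∧
    f (-1) 1 = (1/6) * f 0 0 ∧ f (-1) (-1) = (1/6) * f 0 0 := by
  obtain ⟨-, c2, -, c4, c5, c6, -, -, -⟩ := h 0 0
  obtain ⟨-, -, d3, -, -, d6, -, -, -⟩ := h 0 (-1)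
  obtain ⟨-, -, -, -, -, -, e7, e8, -⟩ := h (-1) 0
  obtain ⟨-, -, -, -, -, -, -, -, f9⟩ := h (-1) (-1)
  norm_num at c2 c4 c5 c6 d3 d6 e7 e8 f9
  have v1 : f 0 1 = -(1/3) * f 0 0 := by linarith
  have v2 : f 0 (-1) = -(1/3) * f 0 0 := by linarith
  have v3 : f 1 0 = -(1/3) * f 0 0 := by linarith
  have v4 : f (-1) 0 = -(1/3) * f 0 0 := by linarith
  have v5 : f 1 1 = (1/6) * f 0 0 := by linarith
  have v6 : f 1 (-1) = (1/6) * f 0 0 := by linarith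
  have v7 : f (-1) 1 = (1/6) * f 0 0 := by linarith
  have v8 : f (-1) (-1) = (1/6) * f 0 0 := by linarith
  exact ⟨v1, v2, v3, v4, v5, v6, v7, v8⟩

lemma gsq_zero_zero_zero : gsq 0 0 0 = 1 := by
  simp [gsq, Scor, wsq]

lemma gsq_orig (K : ℕ) : gsq K 0 0 = 1 := by
  induction K with
  | zero => exact gsq_zero_zero_zero
  | succ K ih =>
    have h := (gsq_rel K 0 0).1
    norm_num at h
    rw [h, ih]

lemma abs_sub_le_abs_add_abs (x y : ℝ) : |x - y| ≤ |x| + |y| := by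
  rw [sub_eq_add_neg]
  exact (abs_add_le x (-y)).trans_eq (by rw [abs_neg])

set_option maxHeartbeats 1600000 in
lemma err_bound {η : ℤ → ℤ → ℝ} (hη : SqRel η η) (hη0 : η 0 0 = 1) :
    ∀ k K : ℕ, ∀ M N : ℤ, M.natAbs ≤ k → N.natAbs ≤ k → k ≤ K →
      |gsq K M N - η M N| ≤ 2 * (5/9)^(K - k) := by
  obtain ⟨v1, v2, v3, v4, v5, v6, v7, v8⟩ := sqrel_block hη
  have herr0 : ∀ K, gsq K 0 0 - η 0 0 = 0 := by
    intro K; rw [gsq_orig, hη0]; ring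
  have hblock : ∀ K : ℕ, ∀ M N : ℤ, M.natAbs ≤ 1 → N.natAbs ≤ 1 →
      |gsq (K+1) M N - η M N| ≤ 2 * (5/9)^K := by
    intro K
    induction K with
    | zero =>
      intro M N hM hN
      have hM' : -1 ≤ M ∧ M ≤ 1 := by omega
      have hN' : -1 ≤ N ∧ N ≤ 1 := by omega
      obtain ⟨hM1, hM2⟩ := hM'
      obtain ⟨hN1, hN2⟩ := hN'
      have key : |η M N| ≤ 1 := by
        interval_cases M <;> interval_cases N <;>
          simp only [v1, v2, v3, v4, v5, v6, v7, v8, hη0] <;>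
          rw [abs_le] <;> constructor <;> norm_num
      calc |gsq 1 M N - η M N| ≤ |gsq 1 M N| + |η M N| := abs_sub_le_abs_add_abs _ _
        _ ≤ 1 + 1 := add_le_add (gsq_abs_le_one _ _ _) key
        _ = 2 * (5/9)^(0:ℕ) := by norm_num
    | succ K ih =>
      intro M N hM hN
      have R := SqRel.sub (gsq_rel (K+1)) hη
      have hp : (0:ℝ) ≤ (5/9)^K := by positivity
      have hM' : -1 ≤ M ∧ M ≤ 1 := by omega
      have hN' : -1 ≤ N ∧ N ≤ 1 := by omega
      obtain ⟨hM1, hM2⟩ := hM'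
      obtain ⟨hN1, hN2⟩ := hN'
      have h00 : gsq (K+1) 0 0 - η 0 0 = 0 := herr0 _
      have hb : ∀ M' N' : ℤ, -1 ≤ M' → M' ≤ 1 → -1 ≤ N' → N' ≤ 1 →
          -(2*(5/9)^K) ≤ gsq (K+1) M' N' - η M' N' ∧
            gsq (K+1) M' N' - η M' N' ≤ 2*(5/9)^K := by
        intro M' N' a b c d
        exact abs_le.mp (ih M' N' (by omega) (by omega))
      have b1 := hb 0 1 (by norm_num) (by norm_num) (by norm_num) (by norm_num)
      have b2 := hb 0 (-1) (by norm_num) (by norm_num) (by norm_num) (by norm_num)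
      have b3 := hb 1 0 (by norm_num) (by norm_num) (by norm_num) (by norm_num)
      have b4 := hb (-1) 0 (by norm_num) (by norm_num) (by norm_num) (by norm_num)
      have b5 := hb 1 1 (by norm_num) (by norm_num) (by norm_num) (by norm_num)
      have b6 := hb 1 (-1) (by norm_num) (by norm_num) (by norm_num) (by norm_num)
      have b7 := hb (-1) 1 (by norm_num) (by norm_num) (by norm_num) (by norm_num)
      have b8 := hb (-1) (-1) (by norm_num) (by norm_num) (by norm_num) (by norm_num)
      have hpow : (2:ℝ) * (5/9)^(K+1) = (5/9) * (2 * (5/9)^K) := by ring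
      interval_cases M <;> interval_cases N
      · -- (-1,-1) : e9 at (-1,-1)
        have e := (R (-1) (-1)).2.2.2.2.2.2.2.2
        norm_num at e
        rw [abs_le]; rw [e, hpow]
        constructor <;> linarith
      · -- (-1,0) : e7 at (-1,0)
        have e := (R (-1) 0).2.2.2.2.2.2.1
        norm_num at e
        rw [abs_le]; rw [e, hpow]
        constructor <;> linarith
      · -- (-1,1) : e8 at (-1,0)
        have e := (R (-1) 0).2.2.2.2.2.2.2.1
        norm_num at e
        rw [abs_le]; rw [e, hpow]
        constructor <;> linarith
      · -- (0,-1) : e3 at (0,-1)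
        have e := (R 0 (-1)).2.2.1
        norm_num at e
        rw [abs_le]; rw [e, hpow]
        constructor <;> linarith
      · -- (0,0)
        rw [herr0]
        simp
        positivity
      · -- (0,1) : e2 at (0,0)
        have e := (R 0 0).2.1
        norm_num at e
        rw [abs_le]; rw [e, hpow]
        constructor <;> linarith
      · -- (1,-1) : e6 at (0,-1)
        have e := (R 0 (-1)).2.2.2.2.2.1
        norm_num at e
        rw [abs_le]; rw [e, hpow]
        constructor <;> linarith
      · -- (1,0) : e4 at (0,0)
        have e := (R 0 0).2.2.2.1
        norm_num at e
        rw [abs_le]; rw [e, hpow]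
        constructor <;> linarith
      · -- (1,1) : e5 at (0,0)
        have e := (R 0 0).2.2.2.2.1
        norm_num at e
        rw [abs_le]; rw [e, hpow]
        constructor <;> linarith
  intro k
  induction k using Nat.strong_induction_on with
  | _ k ih =>
  intro K M N hM hN hkK
  by_cases hk1 : k ≤ 1
  · by_cases hk0 : M = 0 ∧ N = 0
    · obtain ⟨rfl, rfl⟩ := hk0
      rw [herr0]
      simp
      positivity
    · have hk : k = 1 := by
        rcases Nat.lt_or_ge k 1 with h | h
        · exfalso; apply hk0; constructor <;> omega
        · omega
      subst hk
      obtain ⟨K', rfl⟩ : ∃ K', K = K'+1 := ⟨K-1, by omega⟩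
      have h := hblock K' M N hM hN
      have : K' + 1 - 1 = K' := by omega
      rw [this]
      exact h
  · push_neg at hk1
    obtain ⟨K', rfl⟩ : ∃ K', K = K'+1 := ⟨K-1, by omega⟩
    obtain ⟨q, r, rfl, hr0, hr2⟩ : ∃ q r, M = 3*q + r ∧ 0 ≤ r ∧ r < 3 :=
      ⟨M/3, M%3, by omega, by omega, by omega⟩
    obtain ⟨p, s, rfl, hs0, hs2⟩ : ∃ p s, N = 3*p + s ∧ 0 ≤ s ∧ s < 3 :=
      ⟨N/3, N%3, by omega, by omega, by omega⟩
    have hkK' : k - 1 ≤ K' := by omega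
    have hE : K' - (k-1) = K' + 1 - k := by omega
    have hp' : (0:ℝ) ≤ (5/9)^(K'+1-k) := by positivity
    have hb : ∀ M' N' : ℤ, M'.natAbs ≤ k-1 → N'.natAbs ≤ k-1 →
        -(2*(5/9)^(K'+1-k)) ≤ gsq K' M' N' - η M' N' ∧
          gsq K' M' N' - η M' N' ≤ 2*(5/9)^(K'+1-k) := by
      intro M' N' a b
      have := ih (k-1) (by omega) K' M' N' a b hkK'
      rw [hE] at this
      exact abs_le.mp this
    have b1 := hb q p (by omega) (by omega)
    have b2 := hb (q+1) p (by omega) (by omega)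
    have b3 := hb q (p+1) (by omega) (by omega)
    have b4 := hb (q+1) (p+1) (by omega) (by omega)
    have R := SqRel.sub (gsq_rel K') hη
    obtain ⟨e1, e2, e3, e4, e5, e6, e7, e8, e9⟩ := R q p
    simp only [] at e1 e2 e3 e4 e5 e6 e7 e8 e9
    interval_cases r <;> interval_cases s <;>
      (try simp only [add_zero]) <;> rw [abs_le] <;>
      [rw [e1]; rw [e2]; rw [e3]; rw [e4]; rw [e5]; rw [e6]; rw [e7]; rw [e8]; rw [e9]] <;>
      constructor <;> linarith

lemma sqrel_zero {D : ℤ → ℤ → ℝ} (h : SqRel D D) (h0 : D 0 0 = 0) :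
    ∀ M N : ℤ, D M N = 0 := by
  suffices H : ∀ k : ℕ, ∀ M N : ℤ, M.natAbs ≤ k → N.natAbs ≤ k → D M N = 0 by
    intro M N
    exact H (max M.natAbs N.natAbs) M N (le_max_left _ _) (le_max_right _ _)
  intro k
  induction k using Nat.strong_induction_on with
  | _ k ih =>
  intro M N hM hN
  by_cases hk : k ≤ 1
  · obtain ⟨v1, v2, v3, v4, v5, v6, v7, v8⟩ := sqrel_block h
    have hM1 : -1 ≤ M := by omega
    have hM2 : M ≤ 1 := by omega
    have hN1 : -1 ≤ N := by omega
    have hN2 : N ≤ 1 := by omega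
    interval_cases M <;> interval_cases N <;>
      simp only [v1, v2, v3, v4, v5, v6, v7, v8, h0] <;> ring
  · push_neg at hk
    obtain ⟨q, r, rfl, hr0, hr2⟩ : ∃ q r, M = 3*q + r ∧ 0 ≤ r ∧ r < 3 :=
      ⟨M/3, M%3, by omega, by omega, by omega⟩
    obtain ⟨p, s, rfl, hs0, hs2⟩ : ∃ p s, N = 3*p + s ∧ 0 ≤ s ∧ s < 3 :=
      ⟨N/3, N%3, by omega, by omega, by omega⟩
    have z1 : D q p = 0 := ih (k-1) (by omega) q p (by omega) (by omega)
    have z2 : D (q+1) p = 0 := ih (k-1) (by omega) (q+1) p (by omega) (by omega)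
    have z3 : D q (p+1) = 0 := ih (k-1) (by omega) q (p+1) (by omega) (by omega)
    have z4 : D (q+1) (p+1) = 0 := ih (k-1) (by omega) (q+1) (p+1) (by omega) (by omega)
    obtain ⟨e1, e2, e3, e4, e5, e6, e7, e8, e9⟩ := h q p
    interval_cases r <;> interval_cases s <;> (try simp only [add_zero]) <;>
      [rw [e1]; rw [e2]; rw [e3]; rw [e4]; rw [e5]; rw [e6]; rw [e7]; rw [e8]; rw [e9]] <;>
      simp only [z1, z2, z3, z4] <;> norm_num

section
variable {α : Type*} [AddCommGroup α]

lemma sum_shift_one (p : ℕ) (f : ℤ → α) (hf : ∀ x : ℤ, f (x + p) = f x) :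
    ∑ i ∈ range p, f (↑i + 1) = ∑ i ∈ range p, f ↑i := by
  cases p with
  | zero => simp
  | succ p =>
    rw [Finset.sum_range_succ, Finset.sum_range_succ' (fun i => f ↑i) p]
    have h1 : f ((p:ℤ) + 1) = f 0 := by
      have := hf 0
      push_cast at this ⊢
      rw [← this]
      ring_nf
    rw [h1]
    have h2 : ∀ i ∈ range p, f ((i:ℤ) + 1) = f (↑(i + 1)) := by
      intro i _; push_cast; ring_nf
    rw [Finset.sum_congr rfl h2]
    abel

lemma sum_shift_nat (p : ℕ) (f : ℤ → α) (hf : ∀ x : ℤ, f (x + p) = f x) (t : ℕ) :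
    ∑ i ∈ range p, f (↑i + t) = ∑ i ∈ range p, f ↑i := by
  induction t with
  | zero => simp
  | succ t ih =>
    have step := sum_shift_one p (fun x => f (x + t)) (fun x => by rw [show x + (p:ℤ) + (t:ℤ) = x + (t:ℤ) + (p:ℤ) by ring, hf (x + t)])
    have e : ∀ i ∈ range p, f (↑i + ↑(t+1)) = f (↑i + 1 + ↑t) := by
      intro i _; congr 1; push_cast; ring
    rw [Finset.sum_congr rfl e]
    rw [step]
    exact ih

lemma sum_shift (p : ℕ) (f : ℤ → α) (hf : ∀ x : ℤ, f (x + p) = f x) (t : ℤ) :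
    ∑ i ∈ range p, f (↑i + t) = ∑ i ∈ range p, f ↑i := by
  rcases le_or_gt 0 t with h | h
  · obtain ⟨t', rfl⟩ : ∃ t' : ℕ, t = ↑t' := ⟨t.toNat, by omega⟩
    exact sum_shift_nat p f hf t'
  · have key := sum_shift_nat p (fun x => f (x + t))
      (fun x => by rw [show x + (p:ℤ) + t = x + t + (p:ℤ) by ring, hf (x + t)]) (-t).toNat
    have e : ∀ i ∈ range p, f (↑i + ↑(-t).toNat + t) = f ↑i := by
      intro i _; congr 1; omega
    rw [Finset.sum_congr rfl e] at key
    exact key.symm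
end

lemma Scor_rep (K : ℕ) (A B C D : ℤ) :
    Scor K (A - C) (B - D)
      = ∑ i ∈ range (3^K), ∑ j ∈ range (3^K),
          wsq K (↑i + C) (↑j + D) * wsq K (↑i + A) (↑j + B) := by
  have hcast : ((3^K : ℕ) : ℤ) = (3:ℤ)^K := by push_cast; ring
  have inner : ∀ x : ℤ,
      ∑ j ∈ range (3^K), wsq K x j * wsq K (x + (A - C)) (j + (B - D))
        = ∑ j ∈ range (3^K), wsq K x (↑j + D) * wsq K (x + (A - C)) (↑j + B) := by
    intro x
    have hper : ∀ y : ℤ,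
        (fun y => wsq K x (y + D) * wsq K (x + (A - C)) (y + D + (B - D))) (y + (3^K : ℕ))
          = (fun y => wsq K x (y + D) * wsq K (x + (A - C)) (y + D + (B - D))) y := by
      intro y
      simp only []
      rw [hcast, show y + (3:ℤ)^K + D = y + D + 3^K by ring,
        show y + D + 3^K + (B - D) = y + D + (B - D) + 3^K by ring,
        wsq_per_right, wsq_per_right]
    have h := sum_shift (3^K) (fun y => wsq K x (y + D) * wsq K (x + (A - C)) (y + D + (B - D))) hper 0
    -- not useful; instead use shift to relate the two sums directly
    have h2 := sum_shift (3^K)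
      (fun y => wsq K x y * wsq K (x + (A - C)) (y + (B - D))) (by
        intro y
        rw [hcast, show y + (3:ℤ)^K + (B - D) = y + (B - D) + 3^K by ring,
          wsq_per_right, wsq_per_right]) D
    rw [← h2]
    refine Finset.sum_congr rfl fun j _ => ?_
    congr 2
    ring
  have outer := sum_shift (3^K)
    (fun x => ∑ j ∈ range (3^K), wsq K x (↑j + D) * wsq K (x + (A - C)) (↑j + B)) (by
      intro x
      refine Finset.sum_congr rfl fun j _ => ?_
      rw [hcast, show x + (3:ℤ)^K + (A - C) = x + (A - C) + 3^K by ring,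
        wsq_per_left, wsq_per_left]) C
  rw [Scor]
  calc ∑ i ∈ range (3^K), ∑ j ∈ range (3^K), wsq K i j * wsq K (↑i + (A - C)) (↑j + (B - D))
      = ∑ i ∈ range (3^K), ∑ j ∈ range (3^K), wsq K i (↑j + D) * wsq K (↑i + (A - C)) (↑j + B) :=
        Finset.sum_congr rfl fun i _ => inner ↑i
    _ = ∑ i ∈ range (3^K), ∑ j ∈ range (3^K), wsq K (↑i + C) (↑j + D) * wsq K (↑i + C + (A - C)) (↑j + B) := by
        rw [← outer]
    _ = ∑ i ∈ range (3^K), ∑ j ∈ range (3^K), wsq K (↑i + C) (↑j + D) * wsq K (↑i + A) (↑j + B) := by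
        refine Finset.sum_congr rfl fun i _ => Finset.sum_congr rfl fun j _ => ?_
        congr 2
        ring

open Complex in
lemma gsq_quad (K : ℕ) (Nn : ℕ) (z : Fin Nn → ℤ × ℤ) (c : Fin Nn → ℂ) :
    ∃ rK : ℝ, 0 ≤ rK ∧
      ∑ i, ∑ j, c i * star (c j) *
          ((gsq K ((z i).1 - (z j).1) ((z i).2 - (z j).2) : ℝ) : ℂ) = (rK : ℂ) := by
  set W : Fin Nn → ℕ → ℕ → ℝ := fun i u v => wsq K (↑u + (z i).1) (↑v + (z i).2) with hW
  refine ⟨(9^K : ℝ)⁻¹ * ∑ u ∈ range (3^K), ∑ v ∈ range (3^K),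
      Complex.normSq (∑ i, c i * ((W i u v : ℝ) : ℂ)), ?_, ?_⟩
  · apply mul_nonneg (by positivity)
    apply Finset.sum_nonneg; intro u _
    apply Finset.sum_nonneg; intro v _
    exact Complex.normSq_nonneg _
  · have key : ∀ i j, ((gsq K ((z i).1 - (z j).1) ((z i).2 - (z j).2) : ℝ) : ℂ)
        = ((9^K : ℝ)⁻¹ : ℂ) * ∑ u ∈ range (3^K), ∑ v ∈ range (3^K),
            ((W j u v : ℝ) : ℂ) * ((W i u v : ℝ) : ℂ) := by
      intro i j
      rw [gsq, Scor_rep K (z i).1 (z i).2 (z j).1 (z j).2, div_eq_inv_mul]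
      push_cast
      simp [Finset.mul_sum]
      rfl
    have swap3 : ∀ (f : Fin Nn → ℕ → ℕ → ℂ),
        (∑ j, ∑ u ∈ range (3^K), ∑ v ∈ range (3^K), f j u v)
          = ∑ u ∈ range (3^K), ∑ v ∈ range (3^K), ∑ j, f j u v := by
      intro f
      rw [Finset.sum_comm]
      exact Finset.sum_congr rfl fun u _ => Finset.sum_comm
    calc ∑ i, ∑ j, c i * star (c j) * ((gsq K ((z i).1 - (z j).1) ((z i).2 - (z j).2) : ℝ) : ℂ)
        = ∑ i, ∑ j, ∑ u ∈ range (3^K), ∑ v ∈ range (3^K),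
            ((9^K : ℝ)⁻¹ : ℂ) * ((c i * ((W i u v : ℝ) : ℂ)) *
              (star (c j) * ((W j u v : ℝ) : ℂ))) := by
          refine Finset.sum_congr rfl fun i _ => Finset.sum_congr rfl fun j _ => ?_
          rw [key i j]
          simp only [Finset.mul_sum]
          refine Finset.sum_congr rfl fun u _ => Finset.sum_congr rfl fun v _ => ?_
          ring
      _ = ∑ i, ∑ u ∈ range (3^K), ∑ v ∈ range (3^K), ∑ j,
            ((9^K : ℝ)⁻¹ : ℂ) * ((c i * ((W i u v : ℝ) : ℂ)) *
              (star (c j) * ((W j u v : ℝ) : ℂ))) := by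
          exact Finset.sum_congr rfl fun i _ => swap3 _
      _ = ∑ u ∈ range (3^K), ∑ v ∈ range (3^K), ∑ i, ∑ j,
            ((9^K : ℝ)⁻¹ : ℂ) * ((c i * ((W i u v : ℝ) : ℂ)) *
              (star (c j) * ((W j u v : ℝ) : ℂ))) := by
          exact swap3 _
      _ = ∑ u ∈ range (3^K), ∑ v ∈ range (3^K),
            ((9^K : ℝ)⁻¹ : ℂ) * ((∑ i, c i * ((W i u v : ℝ) : ℂ)) *
              (∑ j, star (c j) * ((W j u v : ℝ) : ℂ))) := by
          refine Finset.sum_congr rfl fun u _ => Finset.sum_congr rfl fun v _ => ?_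
          rw [Finset.sum_mul_sum]
          simp only [Finset.mul_sum]
      _ = ∑ u ∈ range (3^K), ∑ v ∈ range (3^K),
            ((9^K : ℝ)⁻¹ : ℂ) * ((Complex.normSq (∑ i, c i * ((W i u v : ℝ) : ℂ)) : ℝ) : ℂ) := by
          refine Finset.sum_congr rfl fun u _ => Finset.sum_congr rfl fun v _ => ?_
          congr 1
          have hconj : (∑ j, star (c j) * ((W j u v : ℝ) : ℂ))
              = (starRingEnd ℂ) (∑ j, c j * ((W j u v : ℝ) : ℂ)) := by
            rw [map_sum]
            refine Finset.sum_congr rfl fun j _ => ?_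
            rw [map_mul, Complex.conj_ofReal]
            rfl
          rw [hconj, Complex.mul_conj]
      _ = (((9^K : ℝ)⁻¹ * ∑ u ∈ range (3^K), ∑ v ∈ range (3^K),
            Complex.normSq (∑ i, c i * ((W i u v : ℝ) : ℂ)) : ℝ) : ℂ) := by
          push_cast
          simp only [Finset.mul_sum]

open Complex Filter Topology in
set_option maxHeartbeats 1600000 in
theorem squiral_solution_proportional (a : ℝ) (ha : 0 ≤ a)
    (ζ η : ℤ → ℤ → ℝ) (hζrec : SquiralRec ζ) (hζ0 : ζ 0 0 = a)
    (hηrec : SquiralRec η) (hη0 : η 0 0 = 1) :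
    (∀ m n : ℤ, ζ m n = a * η m n) ∧
    (∀ (N : ℕ) (z : Fin N → ℤ × ℤ) (c : Fin N → ℂ),
      0 ≤ (∑ i, ∑ j, c i * star (c j) *
        (ζ ((z i).1 - (z j).1) ((z i).2 - (z j).2) : ℂ)).re ∧
      (∑ i, ∑ j, c i * star (c j) *
        (ζ ((z i).1 - (z j).1) ((z i).2 - (z j).2) : ℂ)).im = 0) ∧
    (0 < a → ζ 1 1 = a / 6 ∧ ζ 1 1 ≠ 0 ∧
      ∀ k : ℕ, ζ ((3:ℤ)^k) ((3:ℤ)^k) = ζ 1 1) := by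
  have hζ : SqRel ζ ζ := hζrec
  have hη : SqRel η η := hηrec
  -- Part 1 : uniqueness
  have part1 : ∀ m n : ℤ, ζ m n = a * η m n := by
    have hD : SqRel (fun m n => ζ m n - a * η m n) (fun m n => ζ m n - a * η m n) :=
      SqRel.sub hζ (SqRel.const_mul a hη)
    have hD0 : (fun m n => ζ m n - a * η m n) 0 0 = 0 := by
      simp only []
      rw [hζ0, hη0]
      ring
    have := sqrel_zero hD hD0
    intro m n
    have h := this m n
    linarith
  refine ⟨part1, ?_, ?_⟩
  · -- Part 2 : positive definiteness
    intro N z c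
    set T : ℂ := ∑ i, ∑ j, c i * star (c j) *
        ((η ((z i).1 - (z j).1) ((z i).2 - (z j).2) : ℝ) : ℂ) with hT
    -- convergence of the cyclic approximants
    have hconv : ∀ M N' : ℤ, Tendsto (fun K => gsq K M N') atTop (𝓝 (η M N')) := by
      intro M N'
      set k0 := max M.natAbs N'.natAbs with hk0
      have hb : ∀ᶠ K in atTop, |gsq K M N' - η M N'| ≤ 2 * (5/9:ℝ)^(K - k0) := by
        filter_upwards [eventually_ge_atTop k0] with K hK
        exact err_bound hη hη0 k0 K M N' (le_max_left _ _) (le_max_right _ _) hK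
      have hb0 : Tendsto (fun K : ℕ => 2 * (5/9:ℝ)^(K - k0)) atTop (𝓝 0) := by
        have h1 : Tendsto (fun n : ℕ => (5/9:ℝ)^n) atTop (𝓝 0) :=
          tendsto_pow_atTop_nhds_zero_of_lt_one (by norm_num) (by norm_num)
        have h2 : Tendsto (fun K : ℕ => K - k0) atTop atTop := tendsto_sub_atTop_nat k0
        have := (h1.comp h2).const_mul (2:ℝ)
        simpa using this
      have hzero : Tendsto (fun K => gsq K M N' - η M N') atTop (𝓝 0) :=
        squeeze_zero_norm' hb hb0
      have := hzero.add (tendsto_const_nhds (x := η M N'))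
      simpa using this
    have htend : Tendsto (fun K => ∑ i, ∑ j, c i * star (c j) *
        ((gsq K ((z i).1 - (z j).1) ((z i).2 - (z j).2) : ℝ) : ℂ)) atTop (𝓝 T) := by
      rw [hT]
      apply tendsto_finset_sum
      intro i _
      apply tendsto_finset_sum
      intro j _
      apply Tendsto.const_mul
      exact Complex.continuous_ofReal.continuousAt.tendsto.comp (hconv _ _)
    have hre : ∀ K, 0 ≤ (∑ i, ∑ j, c i * star (c j) *
        ((gsq K ((z i).1 - (z j).1) ((z i).2 - (z j).2) : ℝ) : ℂ)).re := by
      intro K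
      obtain ⟨r, hr, heq⟩ := gsq_quad K N z c
      rw [heq]
      simpa using hr
    have him : ∀ K, (∑ i, ∑ j, c i * star (c j) *
        ((gsq K ((z i).1 - (z j).1) ((z i).2 - (z j).2) : ℝ) : ℂ)).im = 0 := by
      intro K
      obtain ⟨r, hr, heq⟩ := gsq_quad K N z c
      rw [heq]
      simp
    have hTre : 0 ≤ T.re := by
      have h1 : Tendsto (fun K => (∑ i, ∑ j, c i * star (c j) *
          ((gsq K ((z i).1 - (z j).1) ((z i).2 - (z j).2) : ℝ) : ℂ)).re) atTop (𝓝 T.re) :=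
        (Complex.continuous_re.continuousAt.tendsto).comp htend
      exact ge_of_tendsto' h1 hre
    have hTim : T.im = 0 := by
      have h1 : Tendsto (fun K => (∑ i, ∑ j, c i * star (c j) *
          ((gsq K ((z i).1 - (z j).1) ((z i).2 - (z j).2) : ℝ) : ℂ)).im) atTop (𝓝 T.im) :=
        (Complex.continuous_im.continuousAt.tendsto).comp htend
      have h2 : (fun K => (∑ i, ∑ j, c i * star (c j) *
          ((gsq K ((z i).1 - (z j).1) ((z i).2 - (z j).2) : ℝ) : ℂ)).im) = fun _ => (0:ℝ) :=
        funext him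
      rw [h2] at h1
      exact tendsto_nhds_unique h1 tendsto_const_nhds
    have hζT : (∑ i, ∑ j, c i * star (c j) *
        ((ζ ((z i).1 - (z j).1) ((z i).2 - (z j).2) : ℝ) : ℂ)) = (a : ℂ) * T := by
      rw [hT, Finset.mul_sum]
      refine Finset.sum_congr rfl fun i _ => ?_
      rw [Finset.mul_sum]
      refine Finset.sum_congr rfl fun j _ => ?_
      rw [part1]
      push_cast
      ring
    rw [hζT]
    constructor
    · rw [Complex.mul_re]
      simp only [Complex.ofReal_re, Complex.ofReal_im, zero_mul, sub_zero]
      exact mul_nonneg ha hTre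
    · rw [Complex.mul_im]
      simp only [Complex.ofReal_re, Complex.ofReal_im, zero_mul, add_zero]
      rw [hTim]
      ring
  · -- Part 3
    intro ha'
    obtain ⟨-, -, -, -, v5, -, -, -⟩ := sqrel_block hη
    have hζ11 : ζ 1 1 = a / 6 := by
      rw [part1, v5, hη0]
      ring
    refine ⟨hζ11, ?_, ?_⟩
    · rw [hζ11]
      positivity
    · intro k
      induction k with
      | zero => norm_num
      | succ k ih =>
        have h := (hζ (3^k) (3^k)).1
        rw [show (3:ℤ)^(k+1) = 3 * 3^k by ring, h, ih]
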